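/- arXiv:1307.2862 — 2 statements merged into one kernel-verified Lean document; each statement's English description precedes it below -/
import Mathlib

section
/- (Conditional decoupling upper bound, abstract form.) Let φ = φ̃ + h be a decomposition of a random field φ : Ω → ℝ^S into independent components, where h is measurable with respect to a sub-σ-algebra F = σ(φ_{K₁}). Let ĥ be an independent copy of h (independent of φ̃ and of F), set φ̂ = φ̃ + ĥ, let G_δ = {sup_{x∈K₂} |h_x| ≤ δ/2} ∈ F and Ĝ_δ the analogous event for ĥ. Then for any increasing f₂ : ℝ^S → [0,1] depending only on coordinates in K₂, almost surely on G_δ: E[f₂(φ) | F] ≤ E[f₂(φ̂ + δ)] + P(Ĝ_δᶜ), where φ̂ + δ adds δ to every coordinate. -/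
open MeasureTheory ProbabilityTheory Set

lemma aux_indep_sup {Ω : Type*} {m0 : MeasurableSpace Ω} {P : Measure Ω} [IsProbabilityMeasure P]
    {mA mB F : MeasurableSpace Ω} (hA : mA ≤ m0) (hB : mB ≤ m0) (hFle : F ≤ m0)
    (hind1 : Indep mA F P) (hind2 : Indep mB (F ⊔ mA) P) :
    Indep (mA ⊔ mB) F P := by
  set p1 : Set (Set Ω) := {s | ∃ A B, MeasurableSet[mA] A ∧ MeasurableSet[mB] B ∧ s = A ∩ B}
    with hp1def
  have hp1 : IsPiSystem p1 := by
    rintro s ⟨A, B, hA', hB', rfl⟩ t ⟨A', B', hA'', hB'', rfl⟩ _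
    refine ⟨A ∩ A', B ∩ B', hA'.inter hA'', hB'.inter hB'', ?_⟩
    ext ω; constructor <;> (intro hω; simp_all)
  have hgen : mA ⊔ mB = MeasurableSpace.generateFrom p1 := by
    apply le_antisymm
    · refine sup_le ?_ ?_
      · intro s hs
        exact MeasurableSpace.measurableSet_generateFrom
          ⟨s, univ, hs, MeasurableSet.univ, (Set.inter_univ s).symm⟩
      · intro s hs
        exact MeasurableSpace.measurableSet_generateFrom
          ⟨univ, s, MeasurableSet.univ, hs, (Set.univ_inter s).symm⟩
    · refine MeasurableSpace.generateFrom_le ?_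
      rintro s ⟨A, B, hA', hB', rfl⟩
      exact ((le_sup_left : mA ≤ mA ⊔ mB) _ hA').inter ((le_sup_right : mB ≤ mA ⊔ mB) _ hB')
  refine IndepSets.indep (sup_le hA hB) hFle hp1 ?_ hgen
    (@MeasurableSpace.generateFrom_measurableSet Ω F).symm ?_
  · intro s hs t ht _; exact hs.inter ht
  · rw [IndepSets_iff]
    rintro t1 t2 ⟨A, B, hA', hB', rfl⟩ ht2
    have h1 : P (A ∩ t2) = P A * P t2 := (Indep_iff _ _ _).1 hind1 A t2 hA' ht2
    have hAt2 : MeasurableSet[F ⊔ mA] (A ∩ t2) :=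
      ((le_sup_right : mA ≤ F ⊔ mA) _ hA').inter ((le_sup_left : F ≤ F ⊔ mA) _ ht2)
    have h2 : P (B ∩ (A ∩ t2)) = P B * P (A ∩ t2) :=
      (Indep_iff _ _ _).1 hind2 B (A ∩ t2) hB' hAt2
    have h3 : P (A ∩ B) = P A * P B := by
      have := (Indep_iff _ _ _).1 hind2 B A hB' ((le_sup_right : mA ≤ F ⊔ mA) _ hA')
      rw [Set.inter_comm] at this; rw [this, mul_comm]
    have heq : A ∩ B ∩ t2 = B ∩ (A ∩ t2) := by
      rw [Set.inter_comm A B, Set.inter_assoc]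
    rw [heq, h2, h1, h3]; ring

theorem conditional_decoupling_upper
    {Ω : Type*} {m0 : MeasurableSpace Ω} (P : Measure Ω) [IsProbabilityMeasure P]
    {S : Type*} [Countable S] (K₁ K₂ : Set S) (hK : Disjoint K₁ K₂)
    (φtil h hhat : Ω → S → ℝ)
    (hφtilm : Measurable φtil) (hhm : Measurable h) (hhatm : Measurable hhat)
    -- ĥ is a copy of h
    (hcopy : P.map hhat = P.map h)
    (𝓕 : MeasurableSpace Ω) (hF : 𝓕 ≤ m0)
    -- 𝓕 is the σ-algebra generated by φ restricted to K₁, where φ = φ̃ + h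
    (hFdef : 𝓕 = MeasurableSpace.comap
      (fun ω => (fun x : K₁ => φtil ω x + h ω x)) inferInstance)
    -- h is 𝓕-measurable
    (hhF : Measurable[𝓕] h)
    -- φ̃ is independent of 𝓕
    (hind1 : Indep (MeasurableSpace.comap φtil inferInstance) 𝓕 P)
    -- ĥ is independent of (φ̃, 𝓕)
    (hind2 : Indep (MeasurableSpace.comap hhat inferInstance)
      (𝓕 ⊔ MeasurableSpace.comap φtil inferInstance) P)
    (f₂ : (S → ℝ) → ℝ) (hf₂m : Measurable f₂) (hf₂mono : Monotone f₂)
    (hf₂01 : ∀ η, f₂ η ∈ Icc (0:ℝ) 1)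
    (hf₂supp : ∀ η η' : S → ℝ, (∀ x ∈ K₂, η x = η' x) → f₂ η = f₂ η')
    (δ : ℝ) (hδ : 0 < δ) :
    ∀ᵐ ω ∂P, (∀ x ∈ K₂, |h ω x| ≤ δ / 2) →
      (P[fun ω' => f₂ (fun x => φtil ω' x + h ω' x)|𝓕]) ω
        ≤ (∫ ω', f₂ (fun x => φtil ω' x + hhat ω' x + δ) ∂P)
          + (P {ω' | ¬ ∀ x ∈ K₂, |hhat ω' x| ≤ δ / 2}).toReal := by
  classical
  -- the relevant sets
  have htK : MeasurableSet {η : S → ℝ | ∀ x ∈ K₂, |η x| ≤ δ/2} := by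
    have heq : {η : S → ℝ | ∀ x ∈ K₂, |η x| ≤ δ/2} = ⋂ x ∈ K₂, {η | |η x| ≤ δ/2} := by
      ext η; simp
    rw [heq]
    exact MeasurableSet.biInter (Set.to_countable K₂) fun x _ =>
      measurableSet_le (measurable_pi_apply x).abs measurable_const
  set G : Set Ω := {ω | ∀ x ∈ K₂, |h ω x| ≤ δ/2} with hGdef
  set Ghat : Set Ω := {ω | ∀ x ∈ K₂, |hhat ω x| ≤ δ/2} with hGhatdef
  have hGF : MeasurableSet[𝓕] G := hhF htK
  have hGhatB : MeasurableSet[MeasurableSpace.comap hhat inferInstance] Ghat := ⟨_, htK, rfl⟩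
  have hGhat0 : MeasurableSet[m0] Ghat := hhatm htK
  -- the functions
  set φf : Ω → ℝ := fun ω => f₂ (fun x => φtil ω x + h ω x) with hφfdef
  set ind : Ω → ℝ := Set.indicator Ghatᶜ (fun _ => (1:ℝ)) with hinddef
  set fhat : Ω → ℝ := fun ω => f₂ (fun x => φtil ω x + hhat ω x + δ) with hfhatdef
  -- measurability
  have hφfm : Measurable[m0] φf := hf₂m.comp (hφtilm.add hhm)
  have hfhatm : Measurable[m0] fhat :=
    hf₂m.comp ((hφtilm.add hhatm).add (measurable_const : Measurable[m0] fun _ : Ω => fun _ : S => δ))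
  -- integrability
  have hbound : ∀ (g : Ω → ℝ), Measurable[m0] g → (∀ ω, g ω ∈ Icc (0:ℝ) 1) → Integrable g P := by
    intro g hgm hg01
    refine Integrable.mono' (integrable_const (1:ℝ)) hgm.aestronglyMeasurable ?_
    filter_upwards with ω
    rw [Real.norm_eq_abs, abs_of_nonneg (hg01 ω).1]; exact (hg01 ω).2
  have hφfint : Integrable φf P := hbound φf hφfm fun ω => hf₂01 _
  have hfhatint : Integrable fhat P := hbound fhat hfhatm fun ω => hf₂01 _
  have hindint : Integrable ind P := (integrable_const (1:ℝ)).indicator hGhat0.compl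
  have hGindint : Integrable (G.indicator φf) P := hφfint.indicator (hF _ hGF)
  -- pointwise bound
  have hpt : ∀ ω, G.indicator φf ω ≤ (ind + fhat) ω := by
    intro ω
    have hind_nonneg : 0 ≤ ind ω := Set.indicator_nonneg (fun _ _ => zero_le_one) ω
    have hfhat_nonneg : 0 ≤ fhat ω := (hf₂01 _).1
    by_cases hG : ω ∈ G
    · rw [Set.indicator_of_mem hG]
      by_cases hGh : ω ∈ Ghat
      · -- compare via monotonicity
        set η : S → ℝ := fun x =>
          if x ∈ K₂ then φtil ω x + h ω x else φtil ω x + hhat ω x + δ with hηdef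
        have h1 : φf ω = f₂ η := by
          refine hf₂supp _ _ fun x hx => ?_
          simp [hηdef, hx]
        have h2 : f₂ η ≤ fhat ω := by
          refine hf₂mono fun x => ?_
          by_cases hx : x ∈ K₂
          · have hhb := abs_le.1 (hG x hx)
            have hhatb := abs_le.1 (hGh x hx)
            simp only [hηdef, hx, if_pos]
            linarith [hhb.2, hhatb.1]
          · simp [hηdef, hx]
        calc φf ω = f₂ η := h1
          _ ≤ fhat ω := h2
          _ ≤ ind ω + fhat ω := by linarith
      · have : ind ω = 1 := Set.indicator_of_mem (by simpa using hGh) _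
        have hle1 : φf ω ≤ 1 := (hf₂01 _).2
        simp only [Pi.add_apply]
        linarith
    · rw [Set.indicator_of_notMem hG]
      simp only [Pi.add_apply]
      linarith
  -- conditional expectation computations
  have hc1 : P[G.indicator φf|𝓕] ≤ᵐ[P] P[ind + fhat|𝓕] :=
    condExp_mono hGindint (hindint.add hfhatint) (Filter.Eventually.of_forall hpt)
  have hc2 : P[G.indicator φf|𝓕] =ᵐ[P] G.indicator (P[φf|𝓕]) := condExp_indicator hφfint hGF
  have hc3 : P[ind + fhat|𝓕] =ᵐ[P] P[ind|𝓕] + P[fhat|𝓕] := condExp_add hindint hfhatint 𝓕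
  have hindep_ind : Indep (MeasurableSpace.comap hhat inferInstance) 𝓕 P :=
    indep_of_indep_of_le_right hind2 le_sup_left
  have hc4 : P[ind|𝓕] =ᵐ[P] fun _ => ∫ ω', ind ω' ∂P :=
    condExp_indep_eq hhatm.comap_le hF
      (stronglyMeasurable_const.indicator hGhatB.compl) hindep_ind
  have hindep_sup : Indep (MeasurableSpace.comap φtil inferInstance ⊔
      MeasurableSpace.comap hhat inferInstance) 𝓕 P :=
    aux_indep_sup hφtilm.comap_le hhatm.comap_le hF hind1 hind2
  have hfhatsm : StronglyMeasurable[MeasurableSpace.comap φtil inferInstance ⊔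
      MeasurableSpace.comap hhat inferInstance] fhat := by
    have hpair : Measurable[MeasurableSpace.comap φtil inferInstance ⊔
        MeasurableSpace.comap hhat inferInstance] (fun ω => (φtil ω, hhat ω)) :=
      Measurable.prodMk (Measurable.of_comap_le le_sup_left) (Measurable.of_comap_le le_sup_right)
    have hg : Measurable (fun p : (S → ℝ) × (S → ℝ) => f₂ (fun x => p.1 x + p.2 x + δ)) :=
      hf₂m.comp (measurable_pi_lambda _ fun x =>
        (((measurable_pi_apply x).comp measurable_fst).add
          ((measurable_pi_apply x).comp measurable_snd)).add measurable_const)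
    exact (hg.comp hpair).stronglyMeasurable
  have hc5 : P[fhat|𝓕] =ᵐ[P] fun _ => ∫ ω', fhat ω' ∂P :=
    condExp_indep_eq (sup_le hφtilm.comap_le hhatm.comap_le) hF hfhatsm hindep_sup
  have hindval : ∫ ω', ind ω' ∂P = (P Ghatᶜ).toReal := by
    rw [hinddef]
    rw [@integral_indicator_const Ω ℝ m0 _ _ P _ (1:ℝ) Ghatᶜ hGhat0.compl, smul_eq_mul, mul_one]
    rfl
  -- conclude
  filter_upwards [hc1, hc2, hc3, hc4, hc5] with ω h1 h2 h3 h4 h5 hG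
  have hmem : ω ∈ G := hG
  have : (P[φf|𝓕]) ω = (P[G.indicator φf|𝓕]) ω := by
    rw [h2, Set.indicator_of_mem hmem]
  have hcompl : {ω' | ¬ ∀ x ∈ K₂, |hhat ω' x| ≤ δ / 2} = Ghatᶜ := by
    ext ω'; simp [hGhatdef]
  rw [hcompl]
  calc (P[φf|𝓕]) ω = (P[G.indicator φf|𝓕]) ω := this
    _ ≤ (P[ind + fhat|𝓕]) ω := h1
    _ = (P[ind|𝓕]) ω + (P[fhat|𝓕]) ω := by rw [h3]; rfl
    _ = (P Ghatᶜ).toReal + ∫ ω', fhat ω' ∂P := by rw [h4, h5, hindval]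
    _ = (∫ ω', fhat ω' ∂P) + (P Ghatᶜ).toReal := by ring
end

section
/- (Conditional decoupling lower bound, abstract form.) In the setting of the previous decomposition φ = φ̃ + h with independent copy ĥ and φ̂ = φ̃ + ĥ, for any increasing f₂ : ℝ^S → [0,1] depending only on coordinates in K₂, almost surely on G_δ: E[f₂(φ) | F] ≥ E[f₂(φ̂ − δ)] − P(Ĝ_δᶜ). -/
open MeasureTheory ProbabilityTheory Set

lemma integrable_of_Icc01 {α : Type*} [MeasurableSpace α] (μ : Measure α) [IsFiniteMeasure μ]
    {f : α → ℝ} (hm : AEStronglyMeasurable f μ) (h01 : ∀ a, f a ∈ Icc (0:ℝ) 1) :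
    Integrable f μ := by
  refine (integrable_const (1:ℝ)).mono' hm (Filter.Eventually.of_forall fun a => ?_)
  rw [Real.norm_eq_abs, abs_le]
  exact ⟨by linarith [(h01 a).1], (h01 a).2⟩

theorem conditional_decoupling_lower
    {Ω : Type*} {m0 : MeasurableSpace Ω} (P : Measure Ω) [IsProbabilityMeasure P]
    {S : Type*} [Countable S] (K₁ K₂ : Set S) (hK : Disjoint K₁ K₂)
    (φtil h hhat : Ω → S → ℝ)
    (hφtilm : Measurable φtil) (hhm : Measurable h) (hhatm : Measurable hhat)
    -- ĥ is a copy of h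
    (hcopy : P.map hhat = P.map h)
    (𝓕 : MeasurableSpace Ω) (hF : 𝓕 ≤ m0)
    -- 𝓕 is the σ-algebra generated by φ restricted to K₁, where φ = φ̃ + h
    (hFdef : 𝓕 = MeasurableSpace.comap
      (fun ω => (fun x : K₁ => φtil ω x + h ω x)) inferInstance)
    -- h is 𝓕-measurable
    (hhF : Measurable[𝓕] h)
    -- φ̃ is independent of 𝓕
    (hind1 : Indep (MeasurableSpace.comap φtil inferInstance) 𝓕 P)
    -- ĥ is independent of (φ̃, 𝓕)
    (hind2 : Indep (MeasurableSpace.comap hhat inferInstance)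
      (𝓕 ⊔ MeasurableSpace.comap φtil inferInstance) P)
    (f₂ : (S → ℝ) → ℝ) (hf₂m : Measurable f₂) (hf₂mono : Monotone f₂)
    (hf₂01 : ∀ η, f₂ η ∈ Icc (0:ℝ) 1)
    (hf₂supp : ∀ η η' : S → ℝ, (∀ x ∈ K₂, η x = η' x) → f₂ η = f₂ η')
    (δ : ℝ) (hδ : 0 < δ) :
    ∀ᵐ ω ∂P, (∀ x ∈ K₂, |h ω x| ≤ δ / 2) →
      (∫ ω', f₂ (fun x => φtil ω' x + hhat ω' x - δ) ∂P)
          - (P {ω' | ¬ ∀ x ∈ K₂, |hhat ω' x| ≤ δ / 2}).toReal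
        ≤ (P[fun ω' => f₂ (fun x => φtil ω' x + h ω' x)|𝓕]) ω := by
  classical
  -- notation
  letI : MeasurableSpace Ω := m0
  set ν : Measure (S → ℝ) := P.map φtil with hν
  haveI : IsProbabilityMeasure ν := Measure.isProbabilityMeasure_map hφtilm.aemeasurable
  set F : (S → ℝ) → ℝ := fun b => ∫ c, f₂ (fun x => c x + b x) ∂ν with hFdef'
  -- measurability of the two-variable map
  have hΨ₀m : Measurable (fun p : (S → ℝ) × (S → ℝ) => f₂ (fun x => p.2 x + p.1 x)) := by
    exact hf₂m.comp (measurable_pi_lambda _ fun x =>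
      ((measurable_pi_apply x).comp measurable_snd).add
        ((measurable_pi_apply x).comp measurable_fst))
  have hFsm : StronglyMeasurable F := by
    have := (hΨ₀m.stronglyMeasurable).integral_prod_right' (ν := ν)
    exact this
  have hF01 : ∀ b, F b ∈ Icc (0:ℝ) 1 := by
    intro b
    have hint : Integrable (fun c => f₂ (fun x => c x + b x)) ν := by
      refine integrable_of_Icc01 ν (Measurable.aestronglyMeasurable ?_) (fun c => hf₂01 _)
      exact hΨ₀m.comp (measurable_const.prodMk measurable_id)
    constructor
    · exact integral_nonneg fun c => (hf₂01 _).1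
    · calc F b ≤ ∫ _, (1:ℝ) ∂ν := integral_mono hint (integrable_const 1) fun c => (hf₂01 _).2
        _ = 1 := by simp
  set f : Ω → ℝ := fun ω' => f₂ (fun x => φtil ω' x + h ω' x) with hfdef
  have hφm : Measurable (fun ω => (fun x => φtil ω x + h ω x)) :=
    measurable_pi_lambda _ fun x =>
      ((measurable_pi_apply x).comp hφtilm).add ((measurable_pi_apply x).comp hhm)
  have hfm : Measurable f := hf₂m.comp hφm
  have hfint : Integrable f P := integrable_of_Icc01 P hfm.aestronglyMeasurable fun ω => hf₂01 _
  set g : Ω → ℝ := fun ω => F (h ω) with hgdef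
  have hgFm : StronglyMeasurable[𝓕] g := hFsm.comp_measurable hhF
  have hgm : Measurable g := hFsm.measurable.comp (hhF.mono hF le_rfl)
  have hgint : Integrable g P := integrable_of_Icc01 P hgm.aestronglyMeasurable fun ω => hF01 _
  haveI : SigmaFinite (P.trim hF) := (isFiniteMeasure_trim hF).toSigmaFinite
  -- Claim A : g is a version of the conditional expectation
  have hAE : g =ᵐ[P] P[f|𝓕] := by
    refine ae_eq_condExp_of_forall_setIntegral_eq hF hfint
      (fun s _ _ => hgint.integrableOn) (fun s hs _ => ?_)
      ⟨g, hgFm, Filter.EventuallyEq.refl _ _⟩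
    have hsm : MeasurableSet s := hF s hs
    -- auxiliary function Y
    set Y : Ω → (S → ℝ) × ℝ := fun ω => (h ω, s.indicator (fun _ => (1:ℝ)) ω) with hYdef
    have hYF : Measurable[𝓕] Y := hhF.prodMk (measurable_const.indicator hs)
    have hYm : Measurable Y := hYF.mono hF le_rfl
    have hXY : IndepFun φtil Y P := by
      rw [IndepFun_iff_Indep]
      exact indep_of_indep_of_le_right hind1 (measurable_iff_comap_le.1 hYF)
    have hmap : P.map (fun ω => (φtil ω, Y ω)) = ν.prod (P.map Y) :=
      (indepFun_iff_map_prod_eq_prod_map_map hφtilm.aemeasurable hYm.aemeasurable).1 hXY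
    haveI : IsProbabilityMeasure (P.map Y) := Measure.isProbabilityMeasure_map hYm.aemeasurable
    set Ψ : (S → ℝ) × ((S → ℝ) × ℝ) → ℝ :=
      fun p => (if p.2.2 = 1 then (1:ℝ) else 0) * f₂ (fun x => p.1 x + p.2.1 x) with hΨdef
    have hΨm : Measurable Ψ := by
      refine Measurable.mul ?_ ?_
      · exact (measurable_const.ite (measurableSet_eq.preimage (measurable_snd.snd))
          measurable_const)
      · exact hf₂m.comp (measurable_pi_lambda _ fun x =>
          ((measurable_pi_apply x).comp measurable_fst).add
            ((measurable_pi_apply x).comp (measurable_fst.comp measurable_snd)))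
    have hΨbd : ∀ p, Ψ p ∈ Icc (-1:ℝ) 1 := by
      intro p
      have h1 := hf₂01 (fun x => p.1 x + p.2.1 x)
      constructor <;> [skip; skip] <;>
        · by_cases hp : p.2.2 = 1 <;> simp only [hΨdef, hp, if_true, if_false, one_mul,
            zero_mul] <;> [linarith [h1.1, h1.2]; linarith [h1.1, h1.2]]
    have hΨint : Integrable Ψ (ν.prod (P.map Y)) := by
      refine (integrable_const (1:ℝ)).mono' hΨm.aestronglyMeasurable
        (Filter.Eventually.of_forall fun p => ?_)
      rw [Real.norm_eq_abs, abs_le]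
      exact ⟨(hΨbd p).1, (hΨbd p).2⟩
    -- left side
    have hL : ∫ ω in s, g ω ∂P = ∫ ω, (if (Y ω).2 = 1 then (1:ℝ) else 0) * F ((Y ω).1) ∂P := by
      rw [← integral_indicator hsm]
      congr 1; funext ω
      by_cases hω : ω ∈ s <;>
        simp [hYdef, indicator, hω, hgdef]
    have hR : ∫ ω in s, f ω ∂P = ∫ ω, Ψ (φtil ω, Y ω) ∂P := by
      rw [← integral_indicator hsm]
      congr 1; funext ω
      by_cases hω : ω ∈ s <;>
        simp [hΨdef, hYdef, indicator, hω, hfdef]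
    rw [hL, hR]
    have step1 : ∫ ω, Ψ (φtil ω, Y ω) ∂P = ∫ p, Ψ p ∂(ν.prod (P.map Y)) := by
      rw [← hmap]
      exact (integral_map (hφtilm.aemeasurable.prodMk hYm.aemeasurable)
        hΨm.aestronglyMeasurable).symm
    rw [step1, integral_prod_symm Ψ hΨint]
    have step2 : ∀ y : (S → ℝ) × ℝ,
        (∫ c, Ψ (c, y) ∂ν) = (if y.2 = 1 then (1:ℝ) else 0) * F y.1 := by
      intro y
      have := integral_const_mul (μ := ν) (if y.2 = 1 then (1:ℝ) else 0)
        (fun c => f₂ (fun x => c x + y.1 x))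
      simpa [hΨdef] using this
    simp_rw [step2]
    have hmeas : AEStronglyMeasurable (fun y : (S → ℝ) × ℝ =>
        (if y.2 = 1 then (1:ℝ) else 0) * F y.1) (P.map Y) :=
      ((measurable_const.ite (measurableSet_eq.preimage measurable_snd)
        measurable_const).mul (hFsm.measurable.comp measurable_fst)).aestronglyMeasurable
    exact (integral_map hYm.aemeasurable hmeas).symm
  -- Claim B and conclusion
  filter_upwards [hAE] with ω hω hωG
  rw [← hω]
  -- the good event for hhat
  set Ghat : Set Ω := {ω' | ∀ x ∈ K₂, |hhat ω' x| ≤ δ / 2} with hGhatdef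
  have hGhatm : MeasurableSet Ghat := by
    have : Ghat = ⋂ x ∈ K₂, {ω' | |hhat ω' x| ≤ δ / 2} := by ext ω'; simp [hGhatdef]
    rw [this]
    exact MeasurableSet.biInter (K₂.to_countable) fun x _ =>
      measurableSet_le ((measurable_pi_apply x).comp hhatm).abs measurable_const
  have hsetc : {ω' | ¬ ∀ x ∈ K₂, |hhat ω' x| ≤ δ / 2} = Ghatᶜ := by
    ext ω'; simp [hGhatdef]
  set q : Ω → ℝ := fun ω' => f₂ (fun x => φtil ω' x + hhat ω' x - δ) with hqdef
  have hqm : Measurable q := hf₂m.comp (measurable_pi_lambda _ fun x =>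
    (((measurable_pi_apply x).comp hφtilm).add ((measurable_pi_apply x).comp hhatm)).sub
      measurable_const)
  have hqint : Integrable q P := integrable_of_Icc01 P hqm.aestronglyMeasurable fun _ => hf₂01 _
  set r : Ω → ℝ := fun ω' => f₂ (fun x => φtil ω' x + h ω x) with hrdef
  have hrm : Measurable r := hf₂m.comp (measurable_pi_lambda _ fun x =>
    ((measurable_pi_apply x).comp hφtilm).add measurable_const)
  have hrint : Integrable r P := integrable_of_Icc01 P hrm.aestronglyMeasurable fun _ => hf₂01 _
  -- F (h ω) = ∫ r
  have hFr : F (h ω) = ∫ ω', r ω' ∂P := by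
    have hmeas : AEStronglyMeasurable (fun c : S → ℝ => f₂ (fun x => c x + h ω x))
        (P.map φtil) :=
      (hf₂m.comp (measurable_pi_lambda _ fun x =>
        ((measurable_pi_apply x).comp measurable_id).add measurable_const)).aestronglyMeasurable
    have h1 : F (h ω) = ∫ c, f₂ (fun x => c x + h ω x) ∂(P.map φtil) := rfl
    rw [h1, integral_map hφtilm.aemeasurable hmeas]
  -- split the integral of q
  have hsplit : ∫ ω', q ω' ∂P = (∫ ω' in Ghat, q ω' ∂P) + ∫ ω' in Ghatᶜ, q ω' ∂P :=
    (integral_add_compl hGhatm hqint).symm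
  have hcompl : ∫ ω' in Ghatᶜ, q ω' ∂P ≤ (P Ghatᶜ).toReal := by
    calc ∫ ω' in Ghatᶜ, q ω' ∂P ≤ ∫ _ in Ghatᶜ, (1:ℝ) ∂P :=
          integral_mono hqint.integrableOn (integrable_const 1) fun ω' => (hf₂01 _).2
      _ = (P Ghatᶜ).toReal := by simp; rfl
  have hcomp : ∫ ω' in Ghat, q ω' ∂P ≤ ∫ ω' in Ghat, r ω' ∂P := by
    refine setIntegral_mono_on hqint.integrableOn hrint.integrableOn hGhatm fun ω' hω' => ?_
    -- pointwise comparison using monotonicity restricted to K₂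
    set η : S → ℝ := fun x => φtil ω' x + hhat ω' x - δ with hη
    set η' : S → ℝ := fun x => φtil ω' x + h ω x with hη'
    set η'' : S → ℝ := fun x => if x ∈ K₂ then η x else η' x with hη''
    have h1 : f₂ η = f₂ η'' := hf₂supp _ _ (fun x hx => by simp [hη'', hx])
    have h2 : η'' ≤ η' := by
      intro x
      by_cases hx : x ∈ K₂
      · simp only [hη'', hx, if_true, hη, hη']
        have hhat_le : hhat ω' x ≤ δ / 2 := (abs_le.1 (hω' x hx)).2
        have hh_ge : -(δ / 2) ≤ h ω x := (abs_le.1 (hωG x hx)).1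
        linarith
      · simp [hη'', hx]
    calc q ω' = f₂ η'' := h1
      _ ≤ f₂ η' := hf₂mono h2
      _ = r ω' := rfl
  have hfull : ∫ ω' in Ghat, r ω' ∂P ≤ ∫ ω', r ω' ∂P :=
    setIntegral_le_integral hrint (Filter.Eventually.of_forall fun ω' => (hf₂01 _).1)
  rw [hsetc]
  rw [show g ω = ∫ ω', r ω' ∂P from hFr]
  linarith [hsplit, hcompl, hcomp, hfull]
end
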